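/- arXiv:2107.13146 — 7 statements merged into one kernel-verified Lean document; each statement's English description precedes it below -/
import Mathlib

section
/- If w = (w_0,…,w_n) is P-feasible and there exists an index î ∈ {1,…,n} with w_{î−1} > max(q_î w_î + p_î R_î, w_î), then there exists a P-feasible vector w' = (w'_0,…,w'_n) with w'_0 < w_0. Consequently, every optimal solution of the linear program P satisfies w_{i−1} = max(q_i w_i + p_i R_i, w_i) for every i ∈ {1,…,n}. -/
/-- `w = (w 0, …, w n)` is feasible for linear program P. -/
def PFeasible (n : ℕ) (p R w : ℕ → ℝ) : Prop :=
  w n = 0 ∧ ∀ i, 1 ≤ i → i ≤ n →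
    (1 - p i) * w i + p i * R i ≤ w (i - 1) ∧ w i ≤ w (i - 1)

/-- A P-feasible point where some DP inequality is strict is not optimal;
consequently every optimal solution of P satisfies the DP equation. -/
theorem strict_feasible_not_optimal_and_optimal_solves_dp (n : ℕ) (hn : 1 ≤ n)
    (p R : ℕ → ℝ) (hp : ∀ i, 1 ≤ i → i ≤ n → 0 < p i ∧ p i < 1) :
    (∀ w : ℕ → ℝ, PFeasible n p R w →
      (∃ i, 1 ≤ i ∧ i ≤ n ∧ max ((1 - p i) * w i + p i * R i) (w i) < w (i - 1)) →
      ∃ w' : ℕ → ℝ, PFeasible n p R w' ∧ w' 0 < w 0) ∧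
    (∀ w : ℕ → ℝ, PFeasible n p R w →
      (∀ w' : ℕ → ℝ, PFeasible n p R w' → w 0 ≤ w' 0) →
      ∀ i, 1 ≤ i → i ≤ n → w (i - 1) = max ((1 - p i) * w i + p i * R i) (w i)) := by
  have main : ∀ w : ℕ → ℝ, PFeasible n p R w →
      (∃ i, 1 ≤ i ∧ i ≤ n ∧ max ((1 - p i) * w i + p i * R i) (w i) < w (i - 1)) →
      ∃ w' : ℕ → ℝ, PFeasible n p R w' ∧ w' 0 < w 0 := by
    rintro w ⟨hwn, hfeas⟩ ⟨i₀, hi₀1, hi₀n, hstrict⟩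
    set ε := w (i₀ - 1) - max ((1 - p i₀) * w i₀ + p i₀ * R i₀) (w i₀) with hε
    have hεpos : 0 < ε := sub_pos.mpr hstrict
    set δ : ℕ → ℝ := fun j => ε * ∏ k ∈ Finset.Ioo j i₀, (1 - p k) with hδ
    have hδpos : ∀ j, 0 < δ j := by
      intro j
      apply mul_pos hεpos
      apply Finset.prod_pos
      intro k hk
      simp only [Finset.mem_Ioo] at hk
      obtain ⟨hk1, hk2⟩ := hk
      have := (hp k (by omega) (by omega)).2
      linarith
    have hδrec : ∀ i, 1 ≤ i → i < i₀ → δ (i - 1) = (1 - p i) * δ i := by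
      intro i hi1 hii
      have hset : Finset.Ioo (i - 1) i₀ = insert i (Finset.Ioo i i₀) := by
        ext k
        simp only [Finset.mem_Ioo, Finset.mem_insert]
        omega
      simp only [hδ, hset]
      rw [Finset.prod_insert (by simp)]
      ring
    have hδtop : δ (i₀ - 1) = ε := by
      have hset : Finset.Ioo (i₀ - 1) i₀ = ∅ := by
        ext k
        simp only [Finset.mem_Ioo, Finset.notMem_empty, iff_false, not_and]
        omega
      simp [hδ, hset]
    refine ⟨fun j => if j < i₀ then w j - δ j else w j, ⟨?_, ?_⟩, ?_⟩
    · dsimp only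
      rw [if_neg (by omega)]
      exact hwn
    · intro i hi1 hin
      obtain ⟨h1, h2⟩ := hfeas i hi1 hin
      dsimp only
      rcases lt_trichotomy i i₀ with hlt | heq | hgt
      · rw [if_pos hlt, if_pos (by omega), hδrec i hi1 hlt]
        have hppos := (hp i hi1 hin).1
        have hpd : 0 < p i * δ i := mul_pos hppos (hδpos i)
        constructor
        · nlinarith [h1]
        · nlinarith [h2]
      · subst heq
        rw [if_neg (by omega), if_pos (by omega), hδtop]
        constructor
        · have := le_max_left ((1 - p i) * w i + p i * R i) (w i)
          linarith
        · have := le_max_right ((1 - p i) * w i + p i * R i) (w i)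
          linarith
      · rw [if_neg (by omega), if_neg (by omega)]
        exact ⟨h1, h2⟩
    · dsimp only
      rw [if_pos (by omega)]
      have := hδpos 0
      linarith
  refine ⟨main, ?_⟩
  intro w hw hopt i hi1 hin
  obtain ⟨h1, h2⟩ := hw.2 i hi1 hin
  by_contra hne
  have hstrict : max ((1 - p i) * w i + p i * R i) (w i) < w (i - 1) :=
    lt_of_le_of_ne (max_le h1 h2) (fun h => hne h.symm)
  obtain ⟨w', hw', hlt⟩ := main w hw ⟨i, hi1, hin, hstrict⟩
  exact absurd (hopt w' hw') (not_le.mpr hlt)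
end

section
/- For an n-dimensional real vector y = (y_1,…,y_n), the following two conditions are equivalent: (c1) there exists π = (π_1,…,π_n) ∈ [0,1]^n such that (y, π) is Q-feasible; (c2) there exists z = (z_0,…,z_n) ∈ ℝ^{n+1} such that (y, z) is FF-feasible. -/
/-- The policy `pol = (pol 1, …, pol n)` lies in the unit box `[0,1]^n`. -/
def UnitBox (n : ℕ) (pol : ℕ → ℝ) : Prop :=
  ∀ i, 1 ≤ i → i ≤ n → 0 ≤ pol i ∧ pol i ≤ 1

/-- `(y, pol)` is feasible for the non-linear program Q. -/
def QFeasible (n : ℕ) (p y pol : ℕ → ℝ) : Prop :=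
  ∀ i, 1 ≤ i → i ≤ n →
    y i = (∏ j ∈ Finset.Icc 1 (i - 1), ((1 - p j) + p j * pol j)) * (p i * (1 - pol i))

/-- `(y, z)` is feasible for the flow formulation FF. -/
def FFFeasible (n : ℕ) (p y z : ℕ → ℝ) : Prop :=
  z 0 = 1 ∧ ∀ i, 1 ≤ i → i ≤ n →
    0 ≤ y i ∧ y i ≤ p i * z (i - 1) ∧ y i + z i = z (i - 1)

/-- Theorem 2: (c1) and (c2) are equivalent. -/
theorem Q_feasible_iff_FF_feasible (n : ℕ) (hn : 1 ≤ n) (p : ℕ → ℝ)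
    (hp : ∀ i, 1 ≤ i → i ≤ n → 0 < p i ∧ p i < 1) (y : ℕ → ℝ) :
    (∃ pol : ℕ → ℝ, UnitBox n pol ∧ QFeasible n p y pol) ↔
    (∃ z : ℕ → ℝ, FFFeasible n p y z) := by
  constructor
  · rintro ⟨pol, hbox, hQ⟩
    refine ⟨fun i => ∏ j ∈ Finset.Icc 1 i, ((1 - p j) + p j * pol j), ?_, ?_⟩
    · simp
    · intro i h1 hni
      have hz0 : 0 ≤ ∏ j ∈ Finset.Icc 1 (i - 1), ((1 - p j) + p j * pol j) := by
        apply Finset.prod_nonneg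
        intro j hj
        simp only [Finset.mem_Icc] at hj
        have hpj := hp j hj.1 (by omega)
        have hbj := hbox j hj.1 (by omega)
        nlinarith [hpj.1, hpj.2, hbj.1]
      have hpi := hp i h1 hni
      have hbi := hbox i h1 hni
      have hy := hQ i h1 hni
      have hsucc : i - 1 + 1 = i := by omega
      have hprod := Finset.prod_Icc_succ_top (a := 1) (b := i - 1) (by omega)
        (f := fun j => (1 - p j) + p j * pol j)
      rw [hsucc] at hprod
      refine ⟨?_, ?_, ?_⟩
      · rw [hy]
        exact mul_nonneg hz0 (mul_nonneg hpi.1.le (by linarith [hbi.2]))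
      · show y i ≤ p i * ∏ j ∈ Finset.Icc 1 (i - 1), ((1 - p j) + p j * pol j)
        rw [hy]
        nlinarith [mul_nonneg (mul_nonneg hz0 hpi.1.le) hbi.1]
      · show y i + (∏ j ∈ Finset.Icc 1 i, ((1 - p j) + p j * pol j))
            = ∏ j ∈ Finset.Icc 1 (i - 1), ((1 - p j) + p j * pol j)
        rw [hprod, hy]
        ring
  · rintro ⟨z, hz0, hFF⟩
    have hnn : ∀ i, i ≤ n → 0 ≤ z i := by
      intro i
      induction i with
      | zero => intro _; rw [hz0]; norm_num
      | succ k ih =>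
        intro hk
        have hFFk := hFF (k + 1) (by omega) hk
        simp only [Nat.add_sub_cancel] at hFFk
        have hpk := hp (k + 1) (by omega) hk
        have hzk := ih (by omega)
        nlinarith [hFFk.1, hFFk.2.1, hFFk.2.2]
    set pol : ℕ → ℝ :=
      fun i => if z (i - 1) = 0 then 0 else 1 - y i / (p i * z (i - 1)) with hpol
    have hprod : ∀ i, i ≤ n →
        ∏ j ∈ Finset.Icc 1 i, ((1 - p j) + p j * pol j) = z i := by
      intro i
      induction i with
      | zero => intro _; simpa using hz0.symm
      | succ k ih =>
        intro hk
        have hFFk := hFF (k + 1) (by omega) hk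
        simp only [Nat.add_sub_cancel] at hFFk
        have hpk := hp (k + 1) (by omega) hk
        rw [Finset.prod_Icc_succ_top (by omega), ih (by omega)]
        by_cases hzk : z k = 0
        · have hy0 : y (k + 1) = 0 := by
            have := hFFk.2.1; have := hFFk.1
            nlinarith
          rw [hzk]
          have : z (k + 1) = 0 := by linarith [hFFk.2.2]
          rw [this]; ring
        · simp only [hpol, Nat.add_sub_cancel, if_neg hzk]
          have hp0 : p (k + 1) ≠ 0 := ne_of_gt hpk.1
          field_simp
          nlinarith [hFFk.2.2]
    refine ⟨pol, ?_, ?_⟩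
    · intro i h1 hni
      have hFFi := hFF i h1 hni
      by_cases hzi : z (i - 1) = 0
      · simp [hpol, hzi]
      · have hzpos : 0 < z (i - 1) := lt_of_le_of_ne (hnn (i - 1) (by omega)) (Ne.symm hzi)
        have hpi := hp i h1 hni
        have hdiv0 : 0 ≤ y i / (p i * z (i - 1)) :=
          div_nonneg hFFi.1 (mul_pos hpi.1 hzpos).le
        have hdiv1 : y i / (p i * z (i - 1)) ≤ 1 :=
          (div_le_one (mul_pos hpi.1 hzpos)).mpr hFFi.2.1
        simp only [hpol, if_neg hzi]
        constructor <;> linarith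
    · intro i h1 hni
      have hFFi := hFF i h1 hni
      rw [hprod (i - 1) (by omega)]
      by_cases hzi : z (i - 1) = 0
      · have hpi := hp i h1 hni
        have hy0 : y i = 0 := by
          have := hFFi.2.1; have := hFFi.1
          nlinarith [hzi]
        rw [hy0, hzi]; ring
      · have hpi := hp i h1 hni
        simp only [hpol, if_neg hzi]
        have hp0 : p i ≠ 0 := ne_of_gt hpi.1
        field_simp
        ring
end

section
/- If (y, π) is Q-feasible, then the vector z defined by z_0 = 1 and z_i = ∏_{j=1}^{i} (q_j + p_j π_j) for i ∈ {1,…,n} makes (y, z) FF-feasible; that is, for every i ∈ {1,…,n} one has z_{i−1} − z_i = y_i, y_i ≥ 0, and p_i z_{i−1} − y_i ≥ 0. -/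
/-- (c1) → (c2): the partial products of q_j + p_j·pol_j give an FF-feasible z. -/
theorem Q_feasible_to_FF_feasible (n : ℕ) (hn : 1 ≤ n) (p : ℕ → ℝ)
    (hp : ∀ i, 1 ≤ i → i ≤ n → 0 < p i ∧ p i < 1)
    (y pol z : ℕ → ℝ) (hpol : UnitBox n pol) (hQ : QFeasible n p y pol)
    (hz0 : z 0 = 1)
    (hz : ∀ i, 1 ≤ i → i ≤ n → z i = ∏ j ∈ Finset.Icc 1 i, ((1 - p j) + p j * pol j)) :
    FFFeasible n p y z ∧
    ∀ i, 1 ≤ i → i ≤ n →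
      z (i - 1) - z i = y i ∧ 0 ≤ y i ∧ 0 ≤ p i * z (i - 1) - y i := by
  have key : ∀ i, 1 ≤ i → i ≤ n →
      z (i - 1) - z i = y i ∧ 0 ≤ y i ∧ 0 ≤ p i * z (i - 1) - y i := by
    intro i h1 h2
    have hzi1 : z (i - 1) = ∏ j ∈ Finset.Icc 1 (i - 1), ((1 - p j) + p j * pol j) := by
      rcases Nat.eq_or_lt_of_le h1 with h | h
      · simp [← h, hz0]
      · exact hz (i - 1) (by omega) (by omega)
    have hnn : 0 ≤ z (i - 1) := by
      rw [hzi1]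
      apply Finset.prod_nonneg
      intro j hj
      simp only [Finset.mem_Icc] at hj
      obtain ⟨hp0, hp1⟩ := hp j hj.1 (by omega)
      obtain ⟨hq0, hq1⟩ := hpol j hj.1 (by omega)
      nlinarith
    have hzi : z i = z (i - 1) * ((1 - p i) + p i * pol i) := by
      have hi : i = i - 1 + 1 := by omega
      rw [hz i h1 h2, hzi1, hi, Finset.prod_Icc_succ_top (by omega)]
      simp
    have hyi : y i = z (i - 1) * (p i * (1 - pol i)) := by
      rw [hQ i h1 h2, hzi1]
    obtain ⟨hp0, hp1⟩ := hp i h1 h2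
    obtain ⟨hq0, hq1⟩ := hpol i h1 h2
    refine ⟨by rw [hzi, hyi]; ring, ?_, ?_⟩
    · rw [hyi]; exact mul_nonneg hnn (by nlinarith)
    · have : p i * z (i - 1) - y i = z (i - 1) * (p i * pol i) := by rw [hyi]; ring
      rw [this]; exact mul_nonneg hnn (by positivity)
  refine ⟨⟨hz0, fun i h1 h2 => ?_⟩, key⟩
  obtain ⟨h1', h2', h3'⟩ := key i h1 h2
  exact ⟨h2', by linarith, by linarith⟩
end

section
/- If (y, z) is FF-feasible, then there exists π = (π_1,…,π_n) with 0 ≤ π_i ≤ 1 for all i such that (y, π) is Q-feasible; moreover one may take π_i = 1 − y_i/(p_i z_{i−1}) for every i ∈ {1,…,n}. -/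
/-- (c2) → (c1): from an FF-feasible pair one recovers a feasible policy,
given by pol_i = 1 - y_i/(p_i z_{i-1}). -/
theorem FF_feasible_to_Q_feasible (n : ℕ) (hn : 1 ≤ n) (p : ℕ → ℝ)
    (hp : ∀ i, 1 ≤ i → i ≤ n → 0 < p i ∧ p i < 1)
    (y z : ℕ → ℝ) (hFF : FFFeasible n p y z) :
    ∃ pol : ℕ → ℝ,
      (∀ i, 1 ≤ i → i ≤ n → pol i = 1 - y i / (p i * z (i - 1))) ∧
      UnitBox n pol ∧ QFeasible n p y pol := by
  obtain ⟨hz0, hF⟩ := hFF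
  -- positivity of z
  have hzpos : ∀ k, k ≤ n → 0 < z k := by
    intro k
    induction k with
    | zero => intro _; rw [hz0]; norm_num
    | succ m ih =>
      intro hm
      have hm' : m ≤ n := Nat.le_of_succ_le hm
      have hzm := ih hm'
      obtain ⟨hy0, hyle, hsum⟩ := hF (m + 1) (Nat.le_add_left 1 m) hm
      have hps := hp (m + 1) (Nat.le_add_left 1 m) hm
      simp only [Nat.add_sub_cancel] at hyle hsum
      have : z (m + 1) = z m - y (m + 1) := by linarith
      rw [this]
      nlinarith [hps.2, hzm]
  set pol : ℕ → ℝ := fun i => 1 - y i / (p i * z (i - 1)) with hpol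
  have hprod : ∀ i, i ≤ n → (∏ j ∈ Finset.Icc 1 i, ((1 - p j) + p j * pol j)) = z i := by
    intro i
    induction i with
    | zero => intro _; simp [hz0]
    | succ m ih =>
      intro hm
      have hm' : m ≤ n := Nat.le_of_succ_le hm
      rw [Finset.prod_Icc_succ_top (Nat.le_add_left 1 m), ih hm']
      obtain ⟨hy0, hyle, hsum⟩ := hF (m + 1) (Nat.le_add_left 1 m) hm
      have hps := hp (m + 1) (Nat.le_add_left 1 m) hm
      have hzm := hzpos m hm'
      simp only [hpol, Nat.add_sub_cancel] at hsum ⊢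
      have hp0 : p (m + 1) ≠ 0 := ne_of_gt hps.1
      have hz0' : z m ≠ 0 := ne_of_gt hzm
      have hterm : 1 - p (m + 1) + p (m + 1) * (1 - y (m + 1) / (p (m + 1) * z m))
          = z (m + 1) / z m := by
        field_simp
        linear_combination (-1 : ℝ) * hsum
      rw [hterm]
      field_simp
  refine ⟨pol, fun i _ _ => rfl, ?_, ?_⟩
  · intro i h1 h2
    obtain ⟨hy0, hyle, _⟩ := hF i h1 h2
    have hps := hp i h1 h2
    have hzm := hzpos (i - 1) (le_trans (Nat.sub_le i 1) h2)
    have hd : 0 < p i * z (i - 1) := mul_pos hps.1 hzm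
    constructor
    · simp only [hpol]
      have : y i / (p i * z (i - 1)) ≤ 1 := by
        rw [div_le_one hd]; exact hyle
      linarith
    · simp only [hpol]
      have : 0 ≤ y i / (p i * z (i - 1)) := div_nonneg hy0 (le_of_lt hd)
      linarith
  · intro i h1 h2
    rw [hprod (i - 1) (le_trans (Nat.sub_le i 1) h2)]
    have hps := hp i h1 h2
    have hzm := hzpos (i - 1) (le_trans (Nat.sub_le i 1) h2)
    simp only [hpol]
    have hp0 : p i ≠ 0 := ne_of_gt hps.1
    have hz0' : z (i - 1) ≠ 0 := ne_of_gt hzm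
    field_simp
    ring
end

section
/- The set of attainable objective values coincides for problems Q and FF: { ∑_{i=1}^n R_i y_i : (y, π) is Q-feasible for some π ∈ [0,1]^n } = { ∑_{i=1}^n R_i y_i : (y, z) is FF-feasible for some z ∈ ℝ^{n+1} }. In particular the two optimization problems have the same optimal value. -/
/-- Problems Q and FF have the same attainable objective values. -/
theorem Q_FF_same_objective_values (n : ℕ) (hn : 1 ≤ n) (p R : ℕ → ℝ)
    (hp : ∀ i, 1 ≤ i → i ≤ n → 0 < p i ∧ p i < 1) :
    {v : ℝ | ∃ y pol : ℕ → ℝ, UnitBox n pol ∧ QFeasible n p y pol ∧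
        v = ∑ i ∈ Finset.Icc 1 n, R i * y i} =
    {v : ℝ | ∃ y z : ℕ → ℝ, FFFeasible n p y z ∧
        v = ∑ i ∈ Finset.Icc 1 n, R i * y i} := by
  ext v
  simp only [Set.mem_setOf_eq]
  constructor
  · rintro ⟨y, pol, hbox, hQ, rfl⟩
    refine ⟨y, fun i => ∏ j ∈ Finset.Icc 1 i, ((1 - p j) + p j * pol j), ⟨by simp, ?_⟩, rfl⟩
    intro i h1 hi
    dsimp only
    obtain ⟨k, rfl⟩ : ∃ k, i = k + 1 := ⟨i - 1, by omega⟩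
    have hk : k + 1 - 1 = k := rfl
    rw [hk]
    have hprodnn : 0 ≤ ∏ j ∈ Finset.Icc 1 k, ((1 - p j) + p j * pol j) := by
      apply Finset.prod_nonneg
      intro j hj
      simp only [Finset.mem_Icc] at hj
      have hpj := hp j hj.1 (by omega)
      have hb := hbox j hj.1 (by omega)
      nlinarith [hpj.1, hpj.2, hb.1, hb.2]
    have hQi := hQ (k + 1) (by omega) hi
    rw [hk] at hQi
    have hsucc : (∏ j ∈ Finset.Icc 1 (k + 1), ((1 - p j) + p j * pol j))
        = (∏ j ∈ Finset.Icc 1 k, ((1 - p j) + p j * pol j))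
          * ((1 - p (k+1)) + p (k+1) * pol (k+1)) := by
      rw [Finset.prod_Icc_succ_top (by omega)]
    have hpk := hp (k + 1) (by omega) hi
    have hbk := hbox (k + 1) (by omega) hi
    refine ⟨?_, ?_, ?_⟩
    · rw [hQi]
      exact mul_nonneg hprodnn (mul_nonneg hpk.1.le (by linarith [hbk.2]))
    · rw [hQi]
      nlinarith [mul_nonneg (mul_nonneg hprodnn hpk.1.le) hbk.1]
    · rw [hQi, hsucc]; ring
  · rintro ⟨y, z, ⟨hz0, hFF⟩, rfl⟩
    have hzpos : ∀ i, i ≤ n → 0 < z i := by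
      intro i
      induction i with
      | zero => intro _; rw [hz0]; exact one_pos
      | succ k ih =>
        intro h
        have hk := ih (by omega)
        have hF := hFF (k + 1) (by omega) h
        have hpk := hp (k + 1) (by omega) h
        simp only [Nat.add_sub_cancel] at hF
        nlinarith [hF.2.1, hF.2.2, hpk.2]
    have hprod : ∀ i, i ≤ n →
        ∏ j ∈ Finset.Icc 1 i, ((1 - p j) + p j * (1 - y j / (p j * z (j - 1)))) = z i := by
      intro i
      induction i with
      | zero => intro _; simp [hz0]
      | succ k ih =>
        intro h
        have hk := ih (by omega)
        have hF := hFF (k + 1) (by omega) h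
        have hpk := hp (k + 1) (by omega) h
        simp only [Nat.add_sub_cancel] at hF ⊢
        rw [Finset.prod_Icc_succ_top (by omega), hk]
        have hzk := hzpos k (by omega)
        have hp0 : p (k + 1) ≠ 0 := ne_of_gt hpk.1
        have hz0' : z k ≠ 0 := ne_of_gt hzk
        simp only [Nat.add_sub_cancel]
        field_simp
        nlinarith [hF.2.2]
    refine ⟨y, fun i => 1 - y i / (p i * z (i - 1)), ?_, ?_, rfl⟩
    · intro i h1 hi
      dsimp only
      obtain ⟨k, rfl⟩ : ∃ k, i = k + 1 := ⟨i - 1, by omega⟩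
      have hF := hFF (k + 1) (by omega) hi
      have hpk := hp (k + 1) (by omega) hi
      simp only [Nat.add_sub_cancel] at hF ⊢
      have hzk := hzpos k (by omega)
      have hden : 0 < p (k + 1) * z k := mul_pos hpk.1 hzk
      constructor
      · have : y (k + 1) / (p (k + 1) * z k) ≤ 1 := (div_le_one hden).mpr hF.2.1
        linarith
      · have : 0 ≤ y (k + 1) / (p (k + 1) * z k) := div_nonneg hF.1 hden.le
        linarith
    · intro i h1 hi
      dsimp only
      obtain ⟨k, rfl⟩ : ∃ k, i = k + 1 := ⟨i - 1, by omega⟩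
      have hF := hFF (k + 1) (by omega) hi
      have hpk := hp (k + 1) (by omega) hi
      simp only [Nat.add_sub_cancel] at hF ⊢
      rw [hprod k (by omega)]
      have hzk := hzpos k (by omega)
      have hp0 : p (k + 1) ≠ 0 := ne_of_gt hpk.1
      have hz0' : z k ≠ 0 := ne_of_gt hzk
      field_simp
      ring
end

section
/- (Weak duality between FF and P.) If (y, z) is FF-feasible and w = (w_0,…,w_n) is P-feasible, then ∑_{i=1}^n R_i y_i ≤ w_0. -/
/-- Weak duality between FF and P. -/
theorem weak_duality_FF_P (n : ℕ) (hn : 1 ≤ n) (p R : ℕ → ℝ)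
    (hp : ∀ i, 1 ≤ i → i ≤ n → 0 < p i ∧ p i < 1)
    (y z w : ℕ → ℝ) (hFF : FFFeasible n p y z) (hw : PFeasible n p R w) :
    ∑ i ∈ Finset.Icc 1 n, R i * y i ≤ w 0 := by
  obtain ⟨hz0, hFF⟩ := hFF
  obtain ⟨hwn, hw⟩ := hw
  -- nonnegativity of z
  have hznn : ∀ k, k ≤ n → 0 ≤ z k := by
    intro k
    induction k with
    | zero => intro _; rw [hz0]; norm_num
    | succ m ih =>
      intro hm
      have hm' : m ≤ n := Nat.le_of_succ_le hm
      obtain ⟨hy0, hyle, hflow⟩ := hFF (m+1) (Nat.le_add_left 1 m) hm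
      have hp' := hp (m+1) (Nat.le_add_left 1 m) hm
      simp only [Nat.add_sub_cancel] at hyle hflow
      have hzm := ih hm'
      nlinarith [hp'.1, hp'.2]
  have key : ∀ k, k ≤ n → ∑ i ∈ Finset.Icc 1 k, R i * y i + w k * z k ≤ w 0 * z 0 := by
    intro k
    induction k with
    | zero => intro _; simp
    | succ m ih =>
      intro hm
      have hm' : m ≤ n := Nat.le_of_succ_le hm
      have h1 : (1:ℕ) ≤ m + 1 := Nat.le_add_left 1 m
      obtain ⟨hy0, hyle, hflow⟩ := hFF (m+1) h1 hm
      obtain ⟨hwP, hwmono⟩ := hw (m+1) h1 hm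
      have hp' := hp (m+1) h1 hm
      simp only [Nat.add_sub_cancel] at hyle hflow hwP hwmono
      rw [Finset.sum_Icc_succ_top h1]
      have hzm := hznn m hm'
      have step : R (m+1) * y (m+1) + w (m+1) * z (m+1) ≤ w m * z m := by
        have hz : z (m+1) = z m - y (m+1) := by linarith
        rw [hz]
        rcases le_or_gt (R (m+1)) (w (m+1)) with hc | hc
        · nlinarith
        · nlinarith [hp'.1, hp'.2, mul_le_mul_of_nonneg_left hyle (le_of_lt (sub_pos.mpr hc))]
      linarith [ih hm']
  have := key n le_rfl
  rw [hwn, hz0] at this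
  linarith
end

section
/- (Strong duality between FF and the DP equation.) Let w* be the DP solution. Then there exists an FF-feasible pair (y, z) with ∑_{i=1}^n R_i y_i = w*_0, and for every FF-feasible pair (y, z) one has ∑_{i=1}^n R_i y_i ≤ w*_0; i.e., the maximum of ∑_{i=1}^n R_i y_i over FF-feasible pairs equals w*_0. -/
/-- `ws` satisfies the dynamic programming equation. -/
def DPSolution (n : ℕ) (p R ws : ℕ → ℝ) : Prop :=
  ws n = 0 ∧ ∀ i, 1 ≤ i → i ≤ n →
    ws (i - 1) = max ((1 - p i) * ws i + p i * R i) (ws i)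

/-- Strong duality: the maximum of the FF objective equals the DP value w*_0. -/
theorem strong_duality_FF_DP (n : ℕ) (hn : 1 ≤ n) (p R : ℕ → ℝ)
    (hp : ∀ i, 1 ≤ i → i ≤ n → 0 < p i ∧ p i < 1)
    (ws : ℕ → ℝ) (hws : DPSolution n p R ws) :
    (∃ y z : ℕ → ℝ, FFFeasible n p y z ∧
      ∑ i ∈ Finset.Icc 1 n, R i * y i = ws 0) ∧
    (∀ y z : ℕ → ℝ, FFFeasible n p y z →
      ∑ i ∈ Finset.Icc 1 n, R i * y i ≤ ws 0) := by
  obtain ⟨hwn, hdp⟩ := hws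
  constructor
  · -- existence
    set z : ℕ → ℝ := fun i =>
      Nat.rec (1 : ℝ)
        (fun k zk => if ws (k + 1) ≤ R (k + 1) then (1 - p (k + 1)) * zk else zk) i with hz
    have hz0 : z 0 = 1 := rfl
    have hzs : ∀ k, z (k + 1) =
        if ws (k + 1) ≤ R (k + 1) then (1 - p (k + 1)) * z k else z k := fun k => rfl
    have hzpos : ∀ m, m ≤ n → 0 < z m := by
      intro m
      induction m with
      | zero => intro _; rw [hz0]; norm_num
      | succ k ih =>
        intro hm
        have hk := ih (Nat.le_of_succ_le hm)
        obtain ⟨hp1, hp2⟩ := hp (k + 1) (by omega) hm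
        rw [hzs]
        split
        · nlinarith
        · exact hk
    refine ⟨fun i => z (i - 1) - z i, z, ⟨hz0, ?_⟩, ?_⟩
    · intro i h1 hi
      obtain ⟨k, rfl⟩ : ∃ k, i = k + 1 := ⟨i - 1, (Nat.succ_pred_eq_of_pos h1).symm⟩
      simp only [Nat.add_sub_cancel]
      obtain ⟨hp1, hp2⟩ := hp (k + 1) h1 hi
      have hzk := hzpos k (Nat.le_of_succ_le hi)
      rw [hzs]
      split
      · refine ⟨by nlinarith, by nlinarith, by ring⟩
      · refine ⟨by simp, by nlinarith, by ring⟩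
    · have main : ∀ m, m ≤ n →
          ∑ i ∈ Finset.Icc 1 m, R i * (z (i - 1) - z i) = ws 0 - ws m * z m := by
        intro m
        induction m with
        | zero => intro _; simp [hz0]
        | succ k ih =>
          intro hm
          have hk := ih (Nat.le_of_succ_le hm)
          obtain ⟨hp1, hp2⟩ := hp (k + 1) (by omega) hm
          have hdk := hdp (k + 1) (by omega) hm
          simp only [Nat.add_sub_cancel] at hdk
          rw [Finset.sum_Icc_succ_top (by omega : 1 ≤ k + 1), hk]
          simp only [Nat.add_sub_cancel]
          rw [hzs]
          split
          · rename_i h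
            rw [max_eq_left (by nlinarith)] at hdk
            rw [hdk]; ring
          · rename_i h
            rw [max_eq_right (by nlinarith)] at hdk
            rw [hdk]; ring
      have := main n le_rfl
      rw [hwn] at this
      simpa using this
  · -- weak duality
    intro y z hfz
    obtain ⟨hz0, hfeas⟩ := hfz
    have hzpos : ∀ m, m ≤ n → 0 < z m := by
      intro m
      induction m with
      | zero => intro _; rw [hz0]; norm_num
      | succ k ih =>
        intro hm
        have hk := ih (Nat.le_of_succ_le hm)
        obtain ⟨hp1, hp2⟩ := hp (k + 1) (by omega) hm
        obtain ⟨hy1, hy2, hy3⟩ := hfeas (k + 1) (by omega) hm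
        simp only [Nat.add_sub_cancel] at hy2 hy3
        nlinarith
    have main : ∀ m, m ≤ n →
        ∑ i ∈ Finset.Icc 1 m, R i * y i ≤ ws 0 - ws m * z m := by
      intro m
      induction m with
      | zero => intro _; simp [hz0]
      | succ k ih =>
        intro hm
        have hk := ih (Nat.le_of_succ_le hm)
        obtain ⟨hp1, hp2⟩ := hp (k + 1) (by omega) hm
        obtain ⟨hy1, hy2, hy3⟩ := hfeas (k + 1) (by omega) hm
        simp only [Nat.add_sub_cancel] at hy2 hy3
        have hdk := hdp (k + 1) (by omega) hm
        simp only [Nat.add_sub_cancel] at hdk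
        have hzk := hzpos k (Nat.le_of_succ_le hm)
        rw [Finset.sum_Icc_succ_top (by omega : 1 ≤ k + 1)]
        have hz1 : z (k + 1) = z k - y (k + 1) := by linarith
        have key : R (k + 1) * y (k + 1) ≤ ws k * z k - ws (k + 1) * z (k + 1) := by
          rw [hz1]
          have h1 : (1 - p (k + 1)) * ws (k + 1) + p (k + 1) * R (k + 1) ≤ ws k :=
            hdk ▸ le_max_left _ _
          have h2 : ws (k + 1) ≤ ws k := hdk ▸ le_max_right _ _
          rcases le_total (R (k + 1)) (ws (k + 1)) with h | h
          · nlinarith [mul_nonneg (sub_nonneg.mpr h2) hzk.le,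
              mul_nonneg (sub_nonneg.mpr h) hy1]
          · nlinarith [mul_le_mul_of_nonneg_left hy2 (sub_nonneg.mpr h),
              mul_le_mul_of_nonneg_right h1 hzk.le]
        linarith
    have := main n le_rfl
    rw [hwn] at this
    simpa using this
end
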